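/- Let X = {0} ∪ {1/n : n ∈ ℕ, n ≥ 4} with the Euclidean metric. Define S : X → X by S(0)=0, S(1/n)=1/(n+1), and T : X → X by T(0)=0, T(1/n)=1/nⁿ for n ≥ 4. Then for all x, y ∈ X, |T(S x) − T(S y)| ≤ (1/3)·(|T x − T(S x)| + |T y − T(S y)|). -/

import Mathlib

theorem extended_kannan_condition_holds_example
    (S T : ℝ → ℝ) (hS0 : S 0 = 0) (hT0 : T 0 = 0)
    (hSn : ∀ n : ℕ, 4 ≤ n → S (1 / n) = 1 / (n + 1 : ℕ))
    (hTn : ∀ n : ℕ, 4 ≤ n → T (1 / n) = 1 / (n : ℝ) ^ n) :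
    ∀ x ∈ ({0} ∪ {x : ℝ | ∃ n : ℕ, 4 ≤ n ∧ x = 1 / n} : Set ℝ),
    ∀ y ∈ ({0} ∪ {x : ℝ | ∃ n : ℕ, 4 ≤ n ∧ x = 1 / n} : Set ℝ),
      |T (S x) - T (S y)| ≤ (1/3) * (|T x - T (S x)| + |T y - T (S y)|) := by
  have key : ∀ p ∈ ({0} ∪ {x : ℝ | ∃ n : ℕ, 4 ≤ n ∧ x = 1 / n} : Set ℝ),
      0 ≤ T (S p) ∧ 4 * T (S p) ≤ T p := by
    rintro p (rfl | ⟨n, hn, rfl⟩)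
    · rw [hS0, hT0]; norm_num
    · have hn1 : (4:ℕ) ≤ n + 1 := by omega
      rw [hSn n hn, hTn (n+1) hn1, hTn n hn]
      push_cast
      have hnpos : (0:ℝ) < n := by positivity
      have h1 : (0:ℝ) < ((n:ℝ)+1)^(n+1) := by positivity
      have h2 : (0:ℝ) < (n:ℝ)^n := by positivity
      constructor
      · positivity
      · rw [mul_one_div, div_le_div_iff₀ h1 h2]
        have : (n:ℝ)^n ≤ ((n:ℝ)+1)^n :=
          pow_le_pow_left₀ (le_of_lt hnpos) (by linarith) n
        have h5 : (5:ℝ) ≤ (n:ℝ) + 1 := by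
          have : (4:ℝ) ≤ (n:ℝ) := by exact_mod_cast hn
          linarith
        calc 4 * (n:ℝ)^n ≤ 4 * ((n:ℝ)+1)^n := by nlinarith
          _ ≤ ((n:ℝ)+1) * ((n:ℝ)+1)^n := by nlinarith [pow_pos (by linarith : (0:ℝ) < (n:ℝ)+1) n]
          _ = 1 * ((n:ℝ)+1)^(n+1) := by rw [pow_succ]; ring
  intro x hx y hy
  obtain ⟨hx1, hx2⟩ := key x hx
  obtain ⟨hy1, hy2⟩ := key y hy
  rw [abs_of_nonneg (show (0:ℝ) ≤ T x - T (S x) by linarith),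
    abs_of_nonneg (show (0:ℝ) ≤ T y - T (S y) by linarith)]
  rcases abs_cases (T (S x) - T (S y)) with ⟨h, _⟩ | ⟨h, _⟩ <;> rw [h] <;> linarith
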